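/- Let σ: ℕ → ℕ be a bijection and let T = T_σ be the associated permutation operator on H. If every equivalence class [m] is finite and sup{card([m]) : m ∈ ℕ} = ∞, then P(T) is a proper dense subspace of H (i.e. P(T) ≠ H and the closure of P(T) equals H). -/

import Mathlib

/-- The orbit `[n] = {σ^k n : k ∈ ℤ}` of `n` under the bijection `σ : ℕ → ℕ`. -/
def permOrbit (σ : Equiv.Perm ℕ) (n : ℕ) : Set ℕ := {m : ℕ | ∃ z : ℤ, (σ ^ z) n = m}

private lemma permOrbit_ncard_le (σ : Equiv.Perm ℕ) {n m : ℕ} (hm : 0 < m)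
    (h : (σ ^ m) n = n) : (permOrbit σ n).ncard ≤ m := by
  have hsub : permOrbit σ n ⊆ (fun j => (σ ^ j) n) '' ((Finset.range m : Finset ℕ) : Set ℕ) := by
    rintro x ⟨z, rfl⟩
    have hz : (σ ^ z) n = (σ ^ (z % (m : ℤ)).toNat) n := by
      have hd : z = (m : ℤ) * (z / m) + z % m := (Int.mul_ediv_add_emod z m).symm
      have hmod : (0:ℤ) ≤ z % m := Int.emod_nonneg z (by exact_mod_cast hm.ne')
      have h1 : (σ ^ ((m : ℤ) * (z / m))) n = n := by
        have : ((σ ^ m) ^ (z / m)) n = n :=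
          Equiv.Perm.zpow_apply_eq_self_of_apply_eq_self h _
        rwa [← zpow_natCast σ m, ← zpow_mul] at this
      have hd' : z = (z % m) + (m : ℤ) * (z / m) := by omega
      calc (σ ^ z) n = (σ ^ ((z % m) + (m : ℤ) * (z / m))) n := by rw [← hd']
        _ = (σ ^ (z % m)) ((σ ^ ((m : ℤ) * (z / m))) n) := by
            rw [zpow_add, Equiv.Perm.mul_apply]
        _ = (σ ^ (z % m)) n := by rw [h1]
        _ = (σ ^ (z % (m : ℤ)).toNat) n := by rw [← zpow_natCast σ, Int.toNat_of_nonneg hmod]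
    refine ⟨(z % (m : ℤ)).toNat, ?_, hz.symm⟩
    simp only [Finset.coe_range, Set.mem_Iio]
    have : z % (m : ℤ) < m := Int.emod_lt_of_pos z (by exact_mod_cast hm)
    omega
  calc (permOrbit σ n).ncard
      ≤ ((fun j => (σ ^ j) n) '' ((Finset.range m : Finset ℕ) : Set ℕ)).ncard :=
        Set.ncard_le_ncard hsub ((Finset.range m).finite_toSet.image _)
    _ ≤ ((Finset.range m : Finset ℕ) : Set ℕ).ncard :=
        Set.ncard_image_le (Finset.range m).finite_toSet
    _ = m := by rw [Set.ncard_coe_finset, Finset.card_range]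

private lemma exists_pow_fix (σ : Equiv.Perm ℕ) (n : ℕ) (hfin : (permOrbit σ n).Finite) :
    ∃ m : ℕ, 0 < m ∧ (σ ^ m) n = n := by
  have hmaps : Set.MapsTo (fun k : ℕ => (σ ^ k) n) Set.univ (permOrbit σ n) := by
    intro k _
    exact ⟨(k : ℤ), by rw [zpow_natCast]⟩
  obtain ⟨a, -, b, -, hab, heq⟩ :=
    Set.Infinite.exists_ne_map_eq_of_mapsTo Set.infinite_univ hmaps hfin
  rcases hab.lt_or_gt with hlt | hlt
  · refine ⟨b - a, by omega, ?_⟩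
    have : (σ ^ a) ((σ ^ (b - a)) n) = (σ ^ a) n := by
      rw [← Equiv.Perm.mul_apply, ← pow_add]
      rw [Nat.add_sub_cancel' hlt.le]
      exact heq.symm
    exact (σ ^ a).injective this
  · refine ⟨a - b, by omega, ?_⟩
    have : (σ ^ b) ((σ ^ (a - b)) n) = (σ ^ b) n := by
      rw [← Equiv.Perm.mul_apply, ← pow_add]
      rw [Nat.add_sub_cancel' hlt.le]
      exact heq
    exact (σ ^ b).injective this

/-- For a permutation operator `T e_n = e_{σ n}` where every orbit of `σ` is finite but the
orbit cardinalities are unbounded, the set of periodic points of `T` is a proper dense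
subspace of `H`. -/
theorem permutation_periodic_points_proper_dense
    {H : Type*} [NormedAddCommGroup H] [InnerProductSpace ℂ H] [CompleteSpace H]
    (e : HilbertBasis ℕ ℂ H) (σ : Equiv.Perm ℕ) (T : H →L[ℂ] H)
    (hT : ∀ n, T (e n) = e (σ n))
    (hfin : ∀ m : ℕ, (permOrbit σ m).Finite)
    (hub : ∀ B : ℕ, ∃ m : ℕ, B < (permOrbit σ m).ncard) :
    {x : H | ∃ m : ℕ, 0 < m ∧ (T ^ m) x = x} ≠ Set.univ ∧
    Dense {x : H | ∃ m : ℕ, 0 < m ∧ (T ^ m) x = x} := by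
  have hTpow : ∀ k n, (T ^ k) (e n) = e ((σ ^ k) n) := by
    intro k
    induction k with
    | zero => intro n; simp
    | succ k ih =>
      intro n
      rw [pow_succ, pow_succ, ContinuousLinearMap.mul_apply, hT, ih, Equiv.Perm.mul_apply]
  have he_inj : Function.Injective e := e.orthonormal.linearIndependent.injective
  -- iterate lemma
  have hiter : ∀ (x : H) (a b : ℕ), (T ^ a) x = x → (T ^ (a * b)) x = x := by
    intro x a b h
    induction b with
    | zero => simp
    | succ b ih =>
      rw [Nat.mul_succ, pow_add, ContinuousLinearMap.mul_apply, h, ih]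
  constructor
  · -- properness via Baire
    intro hP
    have hclosed : ∀ m : ℕ,
        IsClosed ((LinearMap.ker ((T ^ (m + 1) - 1 : H →L[ℂ] H) : H →ₗ[ℂ] H) : Submodule ℂ H) : Set H) := fun m =>
      ContinuousLinearMap.isClosed_ker _
    have hunion : ⋃ m : ℕ, ((LinearMap.ker ((T ^ (m + 1) - 1 : H →L[ℂ] H) : H →ₗ[ℂ] H) : Submodule ℂ H) : Set H)
        = Set.univ := by
      apply Set.eq_univ_of_forall
      intro x
      have hx : x ∈ {x : H | ∃ m : ℕ, 0 < m ∧ (T ^ m) x = x} := hP ▸ Set.mem_univ x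
      obtain ⟨m, hm, hfix⟩ := hx
      refine Set.mem_iUnion.2 ⟨m - 1, ?_⟩
      have : m - 1 + 1 = m := by omega
      rw [SetLike.mem_coe, LinearMap.mem_ker, this]
      change (T ^ m - 1 : H →L[ℂ] H) x = 0
      rw [ContinuousLinearMap.sub_apply, hfix, ContinuousLinearMap.one_apply, sub_self]
    obtain ⟨m, hm⟩ := nonempty_interior_of_iUnion_of_closed hclosed hunion
    have htop : (LinearMap.ker ((T ^ (m + 1) - 1 : H →L[ℂ] H) : H →ₗ[ℂ] H) : Submodule ℂ H) = ⊤ :=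
      Submodule.eq_top_of_nonempty_interior' _ hm
    obtain ⟨n, hn⟩ := hub (m + 1)
    have hmem : e n ∈ (LinearMap.ker ((T ^ (m + 1) - 1 : H →L[ℂ] H) : H →ₗ[ℂ] H) : Submodule ℂ H) := htop ▸ trivial
    rw [LinearMap.mem_ker] at hmem
    have hfix : (T ^ (m + 1)) (e n) = e n := by
      have := hmem
      change (T ^ (m + 1) - 1 : H →L[ℂ] H) (e n) = 0 at this
      rwa [ContinuousLinearMap.sub_apply, ContinuousLinearMap.one_apply, sub_eq_zero] at this
    rw [hTpow] at hfix
    have : (σ ^ (m + 1)) n = n := he_inj hfix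
    have := permOrbit_ncard_le σ (Nat.succ_pos m) this
    omega
  · -- density
    have hspan : ((Submodule.span ℂ (Set.range e) : Submodule ℂ H) : Set H)
        ⊆ {x : H | ∃ m : ℕ, 0 < m ∧ (T ^ m) x = x} := by
      intro x hx
      induction hx using Submodule.span_induction with
      | mem x hx =>
        obtain ⟨n, rfl⟩ := hx
        obtain ⟨m, hm, hfix⟩ := exists_pow_fix σ n (hfin n)
        exact ⟨m, hm, by rw [hTpow, hfix]⟩
      | zero => exact ⟨1, one_pos, by simp⟩
      | add x y _ _ hx hy =>
        obtain ⟨a, ha, hax⟩ := hx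
        obtain ⟨b, hb, hby⟩ := hy
        refine ⟨a * b, Nat.mul_pos ha hb, ?_⟩
        rw [map_add, hiter x a b hax]
        rw [mul_comm, hiter y b a hby]
      | smul c x _ hx =>
        obtain ⟨a, ha, hax⟩ := hx
        exact ⟨a, ha, by rw [map_smul, hax]⟩
    have hdense : Dense ((Submodule.span ℂ (Set.range ⇑e) : Submodule ℂ H) : Set H) :=
      Submodule.dense_iff_topologicalClosure_eq_top.mpr e.dense_span
    exact hdense.mono hspan
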